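/- arXiv:1304.6659 — 6 statements merged into one kernel-verified Lean document; each statement's English description precedes it below -/
import Mathlib

section
/- Let A be a d×n matrix with nonnegative integer entries and columns a_1,…,a_n. In the polynomial ring ℚ[t_1,…,t_d,x_1,…,x_n], let J be the ideal generated by the polynomials x_i − t^{a_i} for i = 1,…,n, where t^{a_i} = t_1^{A_{1i}} ⋯ t_d^{A_{di}}. Then the elimination ideal J ∩ ℚ[x_1,…,x_n] (the preimage of J under the inclusion ℚ[x_1,…,x_n] ↪ ℚ[t_1,…,t_d,x_1,…,x_n]) equals the toric ideal I_A. -/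
open MvPolynomial

/-- The monomial `x^u = ∏ i, x i ^ u i` in `ℚ[x_1,…,x_n]`. -/
noncomputable def monoP {n : ℕ} (u : Fin n → ℕ) : MvPolynomial (Fin n) ℚ :=
  ∏ i, X i ^ u i

/-- The ℚ-algebra homomorphism `φ_A : ℚ[x_1,…,x_n] → ℚ[t_1^{±1},…,t_d^{±1}]`
(the group algebra of `ℤ^d` over `ℚ`) sending `x_i` to `t^{a_i}`, where
`a_i` is the `i`-th column of the integer matrix `A`. -/
noncomputable def phi {d n : ℕ} (A : Matrix (Fin d) (Fin n) ℤ) :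
    MvPolynomial (Fin n) ℚ →ₐ[ℚ] AddMonoidAlgebra ℚ (Fin d → ℤ) :=
  MvPolynomial.aeval fun i => AddMonoidAlgebra.single (fun j => A j i) (1 : ℚ)

/-- The toric ideal `I_A ⊆ ℚ[x_1,…,x_n]`: the kernel of `φ_A`. -/
noncomputable def toricIdeal {d n : ℕ} (A : Matrix (Fin d) (Fin n) ℤ) :
    Ideal (MvPolynomial (Fin n) ℚ) :=
  RingHom.ker (phi A)


-- f : (Fin d →₀ ℕ) →+ (Fin d → ℤ)
noncomputable def fmap (d : ℕ) : (Fin d →₀ ℕ) →+ (Fin d → ℤ) where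
  toFun u := fun j => (u j : ℤ)
  map_zero' := by funext j; simp
  map_add' u v := by funext j; simp

lemma fmap_inj (d : ℕ) : Function.Injective (fmap d) := by
  intro u v h
  ext j
  have := congrFun h j
  simpa [fmap] using this

-- ψ₀ : ℚ[t] → group algebra
noncomputable def psi0 (d : ℕ) : MvPolynomial (Fin d) ℚ →ₐ[ℚ] AddMonoidAlgebra ℚ (Fin d → ℤ) :=
  MvPolynomial.aeval fun j => AddMonoidAlgebra.single (Pi.single j (1:ℤ)) (1:ℚ)

lemma psi0_eq (d : ℕ) : psi0 d =
    (AddMonoidAlgebra.mapDomainAlgHom ℚ ℚ (fmap d) :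
      MvPolynomial (Fin d) ℚ →ₐ[ℚ] AddMonoidAlgebra ℚ (Fin d → ℤ)) := by
  apply MvPolynomial.algHom_ext
  intro j
  show _ = AddMonoidAlgebra.mapDomain (fmap d) (AddMonoidAlgebra.single (Finsupp.single j 1) (1:ℚ))
  rw [AddMonoidAlgebra.mapDomain_single]
  simp only [psi0, aeval_X]
  congr 1
  funext k
  simp [fmap, Finsupp.single_apply, Pi.single_apply, eq_comm]

lemma psi0_inj (d : ℕ) : Function.Injective (psi0 d) := by
  rw [psi0_eq]
  exact AddMonoidAlgebra.mapDomain_injective (fmap_inj d)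

-- the big map ψ : ℚ[t,x] → group algebra
noncomputable def psi {d n : ℕ} (A : Matrix (Fin d) (Fin n) ℕ) :
    MvPolynomial (Fin d ⊕ Fin n) ℚ →ₐ[ℚ] AddMonoidAlgebra ℚ (Fin d → ℤ) :=
  MvPolynomial.aeval (Sum.elim
    (fun j => AddMonoidAlgebra.single (Pi.single j (1:ℤ)) (1:ℚ))
    (fun i => AddMonoidAlgebra.single (fun j => (A j i : ℤ)) (1:ℚ)))

-- substitution σ : ℚ[x] → ℚ[t]
noncomputable def sub {d n : ℕ} (A : Matrix (Fin d) (Fin n) ℕ) :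
    MvPolynomial (Fin n) ℚ →ₐ[ℚ] MvPolynomial (Fin d) ℚ :=
  MvPolynomial.aeval (fun i => ∏ j, X j ^ A j i)

lemma prod_single_pow {d : ℕ} (c : Fin d → ℕ) :
    (∏ j, AddMonoidAlgebra.single (Pi.single j (1:ℤ)) (1:ℚ) ^ c j)
      = AddMonoidAlgebra.single (fun j => (c j : ℤ)) (1:ℚ) := by
  simp only [AddMonoidAlgebra.single_pow, one_pow]
  rw [AddMonoidAlgebra.prod_single]
  simp only [Finset.prod_const_one]
  congr 1
  funext k
  simp [Finset.sum_apply, Pi.single_apply]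

lemma psi_comp_inr {d n : ℕ} (A : Matrix (Fin d) (Fin n) ℕ) :
    (psi A).comp (MvPolynomial.rename (Sum.inr : Fin n → Fin d ⊕ Fin n) :
      MvPolynomial (Fin n) ℚ →ₐ[ℚ] MvPolynomial (Fin d ⊕ Fin n) ℚ)
      = phi (fun j i => (A j i : ℤ)) := by
  apply MvPolynomial.algHom_ext
  intro i
  show psi A (rename Sum.inr (X i)) = _
  rw [rename_X]
  simp only [psi, phi, aeval_X, Sum.elim_inr]

lemma psi0_comp_sub {d n : ℕ} (A : Matrix (Fin d) (Fin n) ℕ) :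
    (psi0 d).comp (sub A) = phi (fun j i => (A j i : ℤ)) := by
  apply MvPolynomial.algHom_ext
  intro i
  show psi0 d (sub A (X i)) = _
  simp only [sub, aeval_X, phi, map_prod, map_pow]
  simp only [psi0, aeval_X]
  exact prod_single_pow (fun j => A j i)

lemma psi_gen_zero {d n : ℕ} (A : Matrix (Fin d) (Fin n) ℕ) (i : Fin n) :
    psi A (X (Sum.inr i) - ∏ j, X (Sum.inl j) ^ A j i) = 0 := by
  simp only [map_sub, map_prod, map_pow, psi, aeval_X, Sum.elim_inl, Sum.elim_inr]
  rw [prod_single_pow (fun j => A j i), sub_self]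

lemma key_mem {d n : ℕ} (A : Matrix (Fin d) (Fin n) ℕ) (p : MvPolynomial (Fin n) ℚ) :
    MvPolynomial.rename (Sum.inr : Fin n → Fin d ⊕ Fin n) p
      - MvPolynomial.rename (Sum.inl : Fin d → Fin d ⊕ Fin n) (sub A p)
      ∈ Ideal.span { q : MvPolynomial (Fin d ⊕ Fin n) ℚ |
          ∃ i : Fin n, q = X (Sum.inr i) - ∏ j, X (Sum.inl j) ^ A j i } := by
  set J := Ideal.span { q : MvPolynomial (Fin d ⊕ Fin n) ℚ |
      ∃ i : Fin n, q = X (Sum.inr i) - ∏ j, X (Sum.inl j) ^ A j i }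
  have h : (Ideal.Quotient.mkₐ ℚ J).comp
      (MvPolynomial.rename (Sum.inr : Fin n → Fin d ⊕ Fin n))
      = (Ideal.Quotient.mkₐ ℚ J).comp
        ((MvPolynomial.rename (Sum.inl : Fin d → Fin d ⊕ Fin n)).comp (sub A)) := by
    apply MvPolynomial.algHom_ext
    intro i
    show Ideal.Quotient.mkₐ ℚ J (rename Sum.inr (X i))
      = Ideal.Quotient.mkₐ ℚ J (rename Sum.inl (sub A (X i)))
    rw [rename_X]
    have : rename (Sum.inl : Fin d → Fin d ⊕ Fin n) (sub A (X i))
        = ∏ j, X (Sum.inl j) ^ A j i := by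
      simp [sub]
    rw [this]
    rw [Ideal.Quotient.mkₐ_eq_mk, Ideal.Quotient.mk_eq_mk_iff_sub_mem]
    exact Ideal.subset_span ⟨i, rfl⟩
  have h2 := AlgHom.congr_fun h p
  simp only [AlgHom.comp_apply, Ideal.Quotient.mkₐ_eq_mk] at h2
  rwa [← Ideal.Quotient.mk_eq_mk_iff_sub_mem]

/-- For a matrix `A` with nonnegative integer entries, the toric
ideal `I_A` is the elimination ideal `J ∩ ℚ[x_1,…,x_n]`, where
`J = ⟨ x_i - t^{a_i} : i = 1,…,n ⟩ ⊆ ℚ[t_1,…,t_d,x_1,…,x_n]` and the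
intersection is the preimage of `J` under the inclusion
`ℚ[x_1,…,x_n] ↪ ℚ[t_1,…,t_d,x_1,…,x_n]` (renaming along `Sum.inr`). -/
theorem toricIdeal_eq_elimination (d n : ℕ) (A : Matrix (Fin d) (Fin n) ℕ) :
    Ideal.comap
        (MvPolynomial.rename (Sum.inr : Fin n → Fin d ⊕ Fin n) :
          MvPolynomial (Fin n) ℚ →ₐ[ℚ] MvPolynomial (Fin d ⊕ Fin n) ℚ)
        (Ideal.span { p : MvPolynomial (Fin d ⊕ Fin n) ℚ |
          ∃ i : Fin n, p = X (Sum.inr i) - ∏ j, X (Sum.inl j) ^ A j i }) =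
      toricIdeal (fun j i => (A j i : ℤ)) := by
  ext p
  simp only [Ideal.mem_comap, toricIdeal, RingHom.mem_ker]
  constructor
  · intro hp
    have hJ : Ideal.span { q : MvPolynomial (Fin d ⊕ Fin n) ℚ |
        ∃ i : Fin n, q = X (Sum.inr i) - ∏ j, X (Sum.inl j) ^ A j i }
        ≤ RingHom.ker (psi A) := by
      rw [Ideal.span_le]
      rintro q ⟨i, rfl⟩
      exact psi_gen_zero A i
    have := hJ hp
    rw [RingHom.mem_ker] at this
    have := AlgHom.congr_fun (psi_comp_inr A) p
    simp only [AlgHom.comp_apply] at this ⊢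
    rw [← this]
    exact hJ hp
  · intro hp
    have h0 : psi0 d (sub A p) = 0 := by
      have := AlgHom.congr_fun (psi0_comp_sub A) p
      simp only [AlgHom.comp_apply] at this
      rw [this, hp]
    have hs : sub A p = 0 := psi0_inj d (by rw [h0, map_zero])
    have := key_mem A p
    rwa [hs, map_zero, sub_zero] at this
end

section
/- Let A be a d×n integer matrix and let k_1,…,k_m ∈ ℤ^n be vectors that generate, as an abelian group, the integer kernel { w ∈ ℤ^n : A·w = 0 }. For w ∈ ℤ^n write w = w⁺ − w⁻ with w⁺, w⁻ ∈ ℕ^n of disjoint support, and let I_K ⊆ ℚ[x_1,…,x_n] be the ideal generated by the binomials x^{k_j⁺} − x^{k_j⁻}, j = 1,…,m. Then the toric ideal I_A equals the saturation of I_K with respect to the product of all variables: I_A = ⋃_{r ≥ 0} ( I_K : (x_1 x_2 ⋯ x_n)^r ), where (I : f^r) = { g : g·f^r ∈ I } is the ideal quotient. -/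
open MvPolynomial

namespace ToricSat

lemma monoP_mul {n : ℕ} (u v : Fin n → ℕ) :
    monoP u * monoP v = monoP (fun i => u i + v i) := by
  simp [monoP, ← Finset.prod_mul_distrib, pow_add]

lemma monoP_eq_monomial {n : ℕ} (s : Fin n →₀ ℕ) :
    monoP (fun i => s i) = monomial s 1 := by
  rw [← prod_X_pow_eq_monomial, monoP]
  exact (Finset.prod_subset (Finset.subset_univ _)
    (by intro x _ hx; simp [Finsupp.notMem_support_iff.mp hx])).symm

lemma prodX_pow {n : ℕ} (N : ℕ) :
    ((∏ i, X i : MvPolynomial (Fin n) ℚ)) ^ N = monoP (fun _ => N) := by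
  simp [monoP, ← Finset.prod_pow]

lemma single_prod {d : ℕ} {ι : Type*} (F : Finset ι) (c : ι → (Fin d → ℤ)) :
    ∏ i ∈ F, AddMonoidAlgebra.single (c i) (1:ℚ) = AddMonoidAlgebra.single (∑ i ∈ F, c i) 1 := by
  classical
  induction F using Finset.induction with
  | empty => simp [AddMonoidAlgebra.one_def]
  | insert _ _ h ih =>
      simp [Finset.prod_insert h, Finset.sum_insert h, ih, AddMonoidAlgebra.single_mul_single]

lemma phi_monomial {d n : ℕ} (A : Matrix (Fin d) (Fin n) ℤ) (s : Fin n →₀ ℕ) (c : ℚ) :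
    phi A (monomial s c) = AddMonoidAlgebra.single (A.mulVecLin (fun i => (s i : ℤ))) c := by
  rw [phi, aeval_monomial]
  rw [Finsupp.prod_fintype _ _ (fun i => by simp)]
  simp only [AddMonoidAlgebra.single_pow, one_pow]
  rw [single_prod]
  have h1 : (algebraMap ℚ (AddMonoidAlgebra ℚ (Fin d → ℤ))) c = AddMonoidAlgebra.single 0 c := rfl
  rw [h1, AddMonoidAlgebra.single_mul_single, zero_add, mul_one]
  congr 1
  funext j
  simp [Matrix.mulVecLin, Matrix.mulVec, dotProduct, Finset.sum_apply, mul_comm]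

lemma phi_monoP {d n : ℕ} (A : Matrix (Fin d) (Fin n) ℤ) (f : Fin n → ℕ) :
    phi A (monoP f) = AddMonoidAlgebra.single (A.mulVecLin (fun i => (f i : ℤ))) 1 := by
  have h : monoP f = monomial (Finsupp.equivFunOnFinite.symm f) 1 := by
    rw [← monoP_eq_monomial]
    congr
  rw [h, phi_monomial]
  simp

/-- `bin w = x^{w⁺} - x^{w⁻}`. -/
noncomputable def bin {n : ℕ} (w : Fin n → ℤ) : MvPolynomial (Fin n) ℚ :=
  monoP (fun i => (w i).toNat) - monoP (fun i => (-(w i)).toNat)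

lemma bin_zero {n : ℕ} : bin (0 : Fin n → ℤ) = 0 := by
  simp [bin]

lemma bin_neg {n : ℕ} (w : Fin n → ℤ) : bin (-w) = - bin w := by
  simp [bin]

lemma bin_add_identity {n : ℕ} (u v : Fin n → ℤ) :
    monoP (fun i => (u i).toNat + (v i).toNat) * bin (u + v)
      = monoP (fun i => (v i).toNat + ((u + v) i).toNat) * bin u
        + monoP (fun i => ((u + v) i).toNat + (-(u i)).toNat) * bin v := by
  unfold bin
  rw [mul_sub, mul_sub, mul_sub, monoP_mul, monoP_mul, monoP_mul, monoP_mul, monoP_mul, monoP_mul]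
  have e1 : (fun i => ((u i).toNat + (v i).toNat) + ((u + v) i).toNat)
      = fun i => ((v i).toNat + ((u + v) i).toNat) + (u i).toNat := by
    funext i; omega
  have e2 : (fun i => ((u i).toNat + (v i).toNat) + (-((u + v) i)).toNat)
      = fun i => (((u + v) i).toNat + (-(u i)).toNat) + (-(v i)).toNat := by
    funext i; simp only [Pi.add_apply]; omega
  have e3 : (fun i => ((v i).toNat + ((u + v) i).toNat) + (-(u i)).toNat)
      = fun i => (((u + v) i).toNat + (-(u i)).toNat) + (v i).toNat := by
    funext i; omega
  rw [e1, e2, e3]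
  ring


section Psat
variable {n m : ℕ} (k : Fin m → Fin n → ℤ)

noncomputable def IK : Ideal (MvPolynomial (Fin n) ℚ) :=
  Ideal.span { p : MvPolynomial (Fin n) ℚ | ∃ j : Fin m,
    p = monoP (fun i => (k j i).toNat) - monoP (fun i => (-(k j i)).toNat) }

def Psat (g : MvPolynomial (Fin n) ℚ) : Prop :=
  ∃ r : ℕ, g * (∏ i, X i) ^ r ∈ IK k

variable {k}

lemma Psat_zero : Psat k 0 := ⟨0, by simp⟩

lemma Psat_add {g h : MvPolynomial (Fin n) ℚ} (hg : Psat k g) (hh : Psat k h) :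
    Psat k (g + h) := by
  obtain ⟨r, hr⟩ := hg
  obtain ⟨s, hs⟩ := hh
  refine ⟨r + s, ?_⟩
  have : (g + h) * (∏ i, X i) ^ (r + s)
      = g * (∏ i, X i) ^ r * (∏ i, X i) ^ s + h * (∏ i, X i) ^ s * (∏ i, X i) ^ r := by
    ring
  rw [this]
  exact add_mem (Ideal.mul_mem_right _ _ hr) (Ideal.mul_mem_right _ _ hs)

lemma Psat_mul {g : MvPolynomial (Fin n) ℚ} (h : MvPolynomial (Fin n) ℚ) (hg : Psat k g) :
    Psat k (h * g) := by
  obtain ⟨r, hr⟩ := hg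
  exact ⟨r, by rw [mul_assoc]; exact Ideal.mul_mem_left _ _ hr⟩

lemma Psat_neg {g : MvPolynomial (Fin n) ℚ} (hg : Psat k g) : Psat k (-g) := by
  have := Psat_mul (-1) hg
  simpa using this

lemma Psat_cancel {c : Fin n → ℕ} {g : MvPolynomial (Fin n) ℚ}
    (h : Psat k (monoP c * g)) : Psat k g := by
  obtain ⟨r, hr⟩ := h
  set N : ℕ := ∑ i, c i with hN
  have hle : ∀ i, c i ≤ N := fun i =>
    Finset.single_le_sum (fun i _ => Nat.zero_le _) (Finset.mem_univ i)
  refine ⟨N + r, ?_⟩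
  have key : monoP (fun i => N - c i) * (monoP c * g * (∏ i, X i) ^ r)
      = g * (∏ i, X i) ^ (N + r) := by
    rw [← mul_assoc, ← mul_assoc, monoP_mul]
    have he : (fun i => (N - c i) + c i) = fun _ => N := by
      funext i; have := hle i; omega
    rw [he, ← prodX_pow, pow_add]
    ring
  rw [← key]
  exact Ideal.mul_mem_left _ _ hr

lemma Psat_bin_gen (j : Fin m) : Psat k (bin (k j)) :=
  ⟨0, by rw [pow_zero, mul_one]; exact Ideal.subset_span ⟨j, rfl⟩⟩

lemma Psat_bin_add {u v : Fin n → ℤ} (hu : Psat k (bin u)) (hv : Psat k (bin v)) :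
    Psat k (bin (u + v)) := by
  apply Psat_cancel (c := fun i => (u i).toNat + (v i).toNat)
  rw [bin_add_identity]
  exact Psat_add (Psat_mul _ hu) (Psat_mul _ hv)

lemma Psat_bin_neg {u : Fin n → ℤ} (hu : Psat k (bin u)) : Psat k (bin (-u)) := by
  rw [bin_neg]; exact Psat_neg hu

lemma Psat_bin_nsmul (c : ℕ) {u : Fin n → ℤ} (hu : Psat k (bin u)) :
    Psat k (bin ((c : ℤ) • u)) := by
  induction c with
  | zero => simpa [bin_zero] using (Psat_zero : Psat k 0)
  | succ c ih =>
      have : ((c + 1 : ℕ) : ℤ) • u = (c : ℤ) • u + u := by push_cast; module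
      rw [this]
      exact Psat_bin_add ih hu

lemma Psat_bin_zsmul (c : ℤ) {u : Fin n → ℤ} (hu : Psat k (bin u)) :
    Psat k (bin (c • u)) := by
  rcases Int.natAbs_eq c with h | h
  · rw [h]; exact Psat_bin_nsmul _ hu
  · rw [h, neg_smul]
    exact Psat_bin_neg (Psat_bin_nsmul _ hu)

lemma Psat_bin_of_mem_span {w : Fin n → ℤ}
    (hw : w ∈ Submodule.span ℤ (Set.range k)) : Psat k (bin w) := by
  induction hw using Submodule.span_induction with
  | mem x hx => obtain ⟨j, rfl⟩ := hx; exact Psat_bin_gen j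
  | zero => simpa [bin_zero] using (Psat_zero : Psat k 0)
  | add x y _ _ hx hy => exact Psat_bin_add hx hy
  | smul c x _ hx => exact Psat_bin_zsmul c hx

end Psat

section Ker
variable {d n m : ℕ} (A : Matrix (Fin d) (Fin n) ℤ)

lemma binom_decomp (u v : Fin n →₀ ℕ) :
    (monomial u 1 : MvPolynomial (Fin n) ℚ) - monomial v 1
      = monoP (fun i => min (u i) (v i)) * bin (fun i => (u i : ℤ) - v i) := by
  rw [bin, mul_sub, monoP_mul, monoP_mul, ← monoP_eq_monomial u, ← monoP_eq_monomial v]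
  congr 1
  · congr 1; funext i; omega
  · congr 1; funext i; omega

lemma phi_eq_sum (g : MvPolynomial (Fin n) ℚ) :
    phi A g = ∑ s ∈ g.support,
      AddMonoidAlgebra.single (A.mulVecLin (fun i => (s i : ℤ))) (coeff s g) := by
  conv_lhs => rw [g.as_sum]
  rw [map_sum]
  exact Finset.sum_congr rfl fun s _ => phi_monomial A s _

lemma exists_partner {g : MvPolynomial (Fin n) ℚ} (hg : phi A g = 0)
    {u : Fin n →₀ ℕ} (hu : u ∈ g.support) :
    ∃ v ∈ g.support, v ≠ u ∧
      A.mulVecLin (fun i => (v i : ℤ)) = A.mulVecLin (fun i => (u i : ℤ)) := by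
  classical
  by_contra hcon
  push_neg at hcon
  have h0 : (∑ s ∈ g.support,
      AddMonoidAlgebra.single (A.mulVecLin (fun i => (s i : ℤ))) (coeff s g)).coeff
        (A.mulVecLin (fun i => (u i : ℤ))) = 0 := by
    rw [← phi_eq_sum, hg]; rfl
  rw [AddMonoidAlgebra.coeff_sum, Finset.sum_apply'] at h0
  rw [Finset.sum_eq_single u (fun s hs hsu => by
      rw [AddMonoidAlgebra.coeff_single, Finsupp.single_apply, if_neg (hcon s hs hsu)])
    (fun h => absurd hu h)] at h0
  rw [AddMonoidAlgebra.coeff_single, Finsupp.single_apply, if_pos rfl] at h0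
  exact MvPolynomial.mem_support_iff.mp hu h0

end Ker

section Main
variable {d n m : ℕ} {A : Matrix (Fin d) (Fin n) ℤ} {k : Fin m → Fin n → ℤ}

lemma psat_of_ker (hk : Submodule.span ℤ (Set.range k) = LinearMap.ker A.mulVecLin) :
    ∀ (N : ℕ) (g : MvPolynomial (Fin n) ℚ), g.support.card ≤ N → phi A g = 0 → Psat k g := by
  intro N
  induction N with
  | zero =>
      intro g hcard _
      have : g = 0 := by
        rw [← MvPolynomial.support_eq_empty, ← Finset.card_eq_zero]
        omega
      rw [this]; exact Psat_zero
  | succ N ih =>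
      intro g hcard hg
      by_cases hg0 : g = 0
      · rw [hg0]; exact Psat_zero
      · obtain ⟨u, hu⟩ := (MvPolynomial.support_nonempty.mpr hg0)
        obtain ⟨v, hv, hvu, hcol⟩ := exists_partner A hg hu
        set c : ℚ := coeff u g with hc
        set b : MvPolynomial (Fin n) ℚ := monomial u 1 - monomial v 1 with hb
        have hbphi : phi A b = 0 := by
          rw [hb, map_sub, phi_monomial, phi_monomial, hcol]
          simp
        set g' : MvPolynomial (Fin n) ℚ := g - C c * b with hg'
        have hsupp : g'.support ⊆ g.support.erase u := by
          intro t ht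
          rw [MvPolynomial.mem_support_iff] at ht
          rw [Finset.mem_erase]
          constructor
          · rintro rfl
            apply ht
            simp [hg', hb, coeff_sub, coeff_C_mul, coeff_monomial,
              if_neg hvu, hc]
          · by_contra hts
            apply ht
            have h1 : coeff t g = 0 := MvPolynomial.notMem_support_iff.mp hts
            have h2 : t ≠ u := fun h => hts (h ▸ hu)
            have h3 : t ≠ v := fun h => hts (h ▸ hv)
            simp [hg', hb, coeff_sub, coeff_C_mul, coeff_monomial, h1,
              if_neg (fun h : u = t => h2 h.symm), if_neg (fun h : v = t => h3 h.symm)]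
        have hcard' : g'.support.card ≤ N := by
          have := Finset.card_le_card hsupp
          have := Finset.card_erase_of_mem hu
          omega
        have hgphi' : phi A g' = 0 := by
          rw [hg', map_sub, map_mul, hbphi, hg]
          ring
        have P1 : Psat k g' := ih g' hcard' hgphi'
        have hwker : A.mulVecLin (fun i => (u i : ℤ) - v i) = 0 := by
          have : (fun i => (u i : ℤ) - v i)
              = (fun i => (u i : ℤ)) - (fun i => (v i : ℤ)) := rfl
          rw [this, map_sub, hcol, sub_self]
        have hwspan : (fun i => (u i : ℤ) - v i) ∈ Submodule.span ℤ (Set.range k) := by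
          rw [hk]; exact hwker
        have Pb : Psat k b := by
          rw [hb, binom_decomp]
          exact Psat_mul _ (Psat_bin_of_mem_span hwspan)
        have : g = g' + C c * b := by rw [hg']; ring
        rw [this]
        exact Psat_add P1 (Psat_mul _ Pb)

lemma IK_le_ker (hk : Submodule.span ℤ (Set.range k) = LinearMap.ker A.mulVecLin) :
    IK k ≤ RingHom.ker (phi A) := by
  rw [IK, Ideal.span_le]
  rintro p ⟨j, rfl⟩
  have hkj : A.mulVecLin (k j) = 0 := by
    have : k j ∈ LinearMap.ker A.mulVecLin := by
      rw [← hk]; exact Submodule.subset_span ⟨j, rfl⟩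
    exact this
  have heq : (fun i => (((k j i).toNat : ℤ)))
      = (fun i => (((-(k j i)).toNat : ℤ))) + k j := by
    funext i; simp only [Pi.add_apply]; omega
  have : phi A (monoP (fun i => (k j i).toNat) - monoP (fun i => (-(k j i)).toNat)) = 0 := by
    rw [map_sub, phi_monoP, phi_monoP, heq, map_add, hkj, add_zero, sub_self]
  exact this

lemma phi_prodX_isUnit : IsUnit (phi A (∏ i, X i)) := by
  have h1 : (∏ i, X i : MvPolynomial (Fin n) ℚ) = monoP (fun _ => 1) := by
    rw [← prodX_pow 1, pow_one]
  rw [h1, phi_monoP]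
  set t := A.mulVecLin (fun i => ((1 : ℕ) : ℤ))
  refine ⟨⟨AddMonoidAlgebra.single t 1, AddMonoidAlgebra.single (-t) 1, ?_, ?_⟩, rfl⟩
  · rw [AddMonoidAlgebra.single_mul_single, add_neg_cancel, mul_one]; rfl
  · rw [AddMonoidAlgebra.single_mul_single, neg_add_cancel, mul_one]; rfl

end Main
end ToricSat

open ToricSat

/-- If `k_1,…,k_m ∈ ℤ^n` generate (as an abelian group, i.e. as a
`ℤ`-module) the integer kernel `{ w ∈ ℤ^n : A·w = 0 }`, and `I_K` is the lattice
ideal generated by the binomials `x^{k_j⁺} - x^{k_j⁻}` (where `w = w⁺ - w⁻` with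
`w⁺, w⁻ ∈ ℕ^n` of disjoint support), then the toric ideal `I_A` is the saturation
`⋃_{r ≥ 0} (I_K : (x_1 ⋯ x_n)^r)`, with `(I : f^r) = { g : g·f^r ∈ I }`. -/
theorem toricIdeal_eq_saturation (d n m : ℕ) (A : Matrix (Fin d) (Fin n) ℤ)
    (k : Fin m → Fin n → ℤ)
    (hk : Submodule.span ℤ (Set.range k) = LinearMap.ker A.mulVecLin) :
    (toricIdeal A : Set (MvPolynomial (Fin n) ℚ)) =
      ⋃ r : ℕ, { g : MvPolynomial (Fin n) ℚ |
        g * (∏ i, X i) ^ r ∈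
          Ideal.span { p : MvPolynomial (Fin n) ℚ | ∃ j : Fin m,
            p = monoP (fun i => (k j i).toNat) - monoP (fun i => (-(k j i)).toNat) } } := by
  ext g
  simp only [Set.mem_iUnion, Set.mem_setOf_eq, SetLike.mem_coe]
  constructor
  · intro hg
    have hker : phi A g = 0 := hg
    exact psat_of_ker hk g.support.card g le_rfl hker
  · rintro ⟨r, hr⟩
    have h0 : phi A (g * (∏ i, X i) ^ r) = 0 := IK_le_ker hk hr
    rw [map_mul, map_pow] at h0
    have hu : IsUnit ((phi A (∏ i, X i)) ^ r) := (phi_prodX_isUnit (A := A)).pow r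
    have : phi A g = 0 := (IsUnit.mul_left_eq_zero hu).mp h0
    exact this
end

section
/- Let A be the 3×5 integer matrix with rows (1,0,0,1,1), (0,−1,0,−1,−2), (−3,1,1,−1,1). Then the toric ideal I_A ⊆ ℚ[z_1,…,z_5] is also generated by just the two binomials z_5 − z_2 z_3 z_4 and z_1 z_2 z_3 − z_4. -/
open MvPolynomial

/-- The body-in-fluid matrix: rows `(1,0,0,1,1)`, `(0,-1,0,-1,-2)`, `(-3,1,1,-1,1)`. -/
noncomputable def Afluid : Matrix (Fin 3) (Fin 5) ℤ :=
  !![1, 0, 0, 1, 1; 0, -1, 0, -1, -2; -3, 1, 1, -1, 1]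

/-! ### Auxiliary machinery -/

/-- Exponent-vector to lattice point map. -/
def Ffun {d n : ℕ} (A : Matrix (Fin d) (Fin n) ℤ) (m : Fin n →₀ ℕ) : Fin d → ℤ :=
  fun j => ∑ i, (m i : ℤ) * A j i

lemma phi_X {d n : ℕ} (A : Matrix (Fin d) (Fin n) ℤ) (i : Fin n) :
    phi A (X i) = AddMonoidAlgebra.single (fun j => A j i) (1 : ℚ) := by
  simp [phi]

lemma phi_monomial {d n : ℕ} (A : Matrix (Fin d) (Fin n) ℤ) (m : Fin n →₀ ℕ) (c : ℚ) :
    phi A (monomial m c) = AddMonoidAlgebra.single (Ffun A m) c := by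
  rw [phi, aeval_monomial]
  rw [Finsupp.prod_fintype _ _ (fun i => pow_zero _)]
  simp only [AddMonoidAlgebra.single_pow, one_pow]
  rw [AddMonoidAlgebra.prod_single, AddMonoidAlgebra.coe_algebraMap]
  simp only [Function.comp_apply, Finset.prod_const_one]
  rw [AddMonoidAlgebra.single_mul_single, zero_add, mul_one]
  congr 1
  funext j
  simp [Ffun, Finset.sum_apply, Pi.smul_apply, nsmul_eq_mul]

lemma phi_eq_mapDomain {d n : ℕ} (A : Matrix (Fin d) (Fin n) ℤ)
    (p : MvPolynomial (Fin n) ℚ) :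
    phi A p = AddMonoidAlgebra.mapDomain (Ffun A) p := by
  induction p using MvPolynomial.induction_on' with
  | monomial m c => rw [phi_monomial, ← single_eq_monomial, AddMonoidAlgebra.mapDomain_single]
  | add p q hp hq =>
      rw [map_add, hp, hq]
      exact (AddMonoidAlgebra.mapDomain_add _ _ _).symm

/-- The square matrix of the first three columns of `Afluid`. -/
def A3 : Matrix (Fin 3) (Fin 3) ℤ := !![1, 0, 0; 0, -1, 0; -3, 1, 1]

lemma Ffun_A3_injective : Function.Injective (Ffun A3) := by
  intro m m' h
  have h0 := congrFun h 0
  have h1 := congrFun h 1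
  have h2 := congrFun h 2
  simp only [Ffun, Fin.sum_univ_three, A3] at h0 h1 h2
  norm_num [Matrix.cons_val_zero, Matrix.cons_val_one, Matrix.head_cons, Matrix.cons_val_two, Matrix.tail_cons] at h0 h1 h2
  have e0 : m 0 = m' 0 := by exact_mod_cast h0
  have e1 : m 1 = m' 1 := by exact_mod_cast h1
  have e2 : m 2 = m' 2 := by
    have : (m 2 : ℤ) = m' 2 := by
      have c0 : (m 0 : ℤ) = m' 0 := by exact_mod_cast e0
      have c1 : (m 1 : ℤ) = m' 1 := by exact_mod_cast e1
      linarith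
    exact_mod_cast this
  ext i
  fin_cases i <;> assumption

lemma phi_A3_injective : Function.Injective (phi A3) := by
  intro p q h
  rw [phi_eq_mapDomain, phi_eq_mapDomain] at h
  exact AddMonoidAlgebra.mapDomain_injective Ffun_A3_injective h

/-- Embedding of the first three variables. -/
def emb : Fin 3 → Fin 5 := ![0, 1, 2]

noncomputable def ρ : MvPolynomial (Fin 5) ℚ →ₐ[ℚ] MvPolynomial (Fin 3) ℚ :=
  aeval ![X 0, X 1, X 2, X 0 * X 1 * X 2, X 0 * (X 1 * X 1) * (X 2 * X 2)]

lemma phi_comp_rename :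
    (phi Afluid).comp (MvPolynomial.rename emb) = phi A3 := by
  apply MvPolynomial.algHom_ext
  intro i
  simp only [AlgHom.comp_apply, rename_X, phi_X]
  congr 1
  funext j
  fin_cases i <;> fin_cases j <;> simp [emb, Afluid, A3]

abbrev Jgen : Set (MvPolynomial (Fin 5) ℚ) :=
  { X 4 - X 1 * X 2 * X 3, X 0 * X 1 * X 2 - X 3 }

lemma key_reduction (p : MvPolynomial (Fin 5) ℚ) :
    p - MvPolynomial.rename emb (ρ p) ∈ Ideal.span Jgen := by
  have hg1 : (X 4 - X 1 * X 2 * X 3 : MvPolynomial (Fin 5) ℚ) ∈ Ideal.span Jgen :=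
    Ideal.subset_span (Or.inl rfl)
  have hg2 : (X 0 * X 1 * X 2 - X 3 : MvPolynomial (Fin 5) ℚ) ∈ Ideal.span Jgen :=
    Ideal.subset_span (Or.inr rfl)
  have r0 : ρ (X 0) = X 0 := by simp [ρ]
  have r1 : ρ (X 1) = X 1 := by simp [ρ]
  have r2 : ρ (X 2) = X 2 := by simp [ρ]
  have r3 : ρ (X 3) = X 0 * X 1 * X 2 := by
    simp [ρ, Matrix.cons_val_three, Matrix.tail_cons, Matrix.head_cons]
  have r4 : ρ (X 4) = X 0 * (X 1 * X 1) * (X 2 * X 2) := by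
    simp [ρ, Matrix.cons_val_four, Matrix.tail_cons, Matrix.head_cons]
  have hX : ∀ i : Fin 5, X i - MvPolynomial.rename emb (ρ (X i)) ∈ Ideal.span Jgen := by
    intro i
    fin_cases i
    · show (X 0 : MvPolynomial (Fin 5) ℚ) - MvPolynomial.rename emb (ρ (X 0)) ∈ _
      rw [r0]; simp [emb, (Ideal.span Jgen).zero_mem]
    · show (X 1 : MvPolynomial (Fin 5) ℚ) - MvPolynomial.rename emb (ρ (X 1)) ∈ _
      rw [r1]; simp [emb, (Ideal.span Jgen).zero_mem]
    · show (X 2 : MvPolynomial (Fin 5) ℚ) - MvPolynomial.rename emb (ρ (X 2)) ∈ _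
      rw [r2]; simp [emb, (Ideal.span Jgen).zero_mem]
    · show (X 3 : MvPolynomial (Fin 5) ℚ) - MvPolynomial.rename emb (ρ (X 3)) ∈ _
      rw [r3]
      have h : (X 3 : MvPolynomial (Fin 5) ℚ) -
          MvPolynomial.rename emb (X 0 * X 1 * X 2) = -(X 0 * X 1 * X 2 - X 3) := by
        simp [emb]; try ring
      rw [h]
      exact (Ideal.span Jgen).neg_mem hg2
    · show (X 4 : MvPolynomial (Fin 5) ℚ) - MvPolynomial.rename emb (ρ (X 4)) ∈ _
      rw [r4]
      have h : (X 4 : MvPolynomial (Fin 5) ℚ) -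
          MvPolynomial.rename emb (X 0 * (X 1 * X 1) * (X 2 * X 2)) =
          (X 4 - X 1 * X 2 * X 3) - (X 1 * X 2) * (X 0 * X 1 * X 2 - X 3) := by
        simp [emb]; try ring
      rw [h]
      exact (Ideal.span Jgen).sub_mem hg1 ((Ideal.span Jgen).mul_mem_left _ hg2)
  induction p using MvPolynomial.induction_on with
  | C a => simp [ρ, (Ideal.span Jgen).zero_mem]
  | add p q hp hq =>
      have h : p + q - MvPolynomial.rename emb (ρ (p + q)) =
          (p - MvPolynomial.rename emb (ρ p)) + (q - MvPolynomial.rename emb (ρ q)) := by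
        rw [map_add, map_add]; ring
      rw [h]
      exact (Ideal.span Jgen).add_mem hp hq
  | mul_X p i hp =>
      have h : p * X i - MvPolynomial.rename emb (ρ (p * X i)) =
          (p - MvPolynomial.rename emb (ρ p)) * X i +
            MvPolynomial.rename emb (ρ p) * (X i - MvPolynomial.rename emb (ρ (X i))) := by
        rw [map_mul, map_mul]; ring
      rw [h]
      exact (Ideal.span Jgen).add_mem ((Ideal.span Jgen).mul_mem_right _ hp)
        ((Ideal.span Jgen).mul_mem_left _ (hX i))

lemma span_le_ker : Ideal.span Jgen ≤ toricIdeal Afluid := by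
  rw [Ideal.span_le]
  rintro g (rfl | rfl) <;>
  · show _ ∈ RingHom.ker (phi Afluid)
    rw [RingHom.mem_ker]
    simp only [RingHom.coe_coe, map_sub, map_mul, phi_X,
      AddMonoidAlgebra.single_mul_single, mul_one, one_mul]
    rw [sub_eq_zero]
    congr 1
    funext j
    fin_cases j <;> decide

/-- The toric ideal of the body-in-fluid matrix is also generated
by just the two binomials `z_5 - z_2 z_3 z_4` and `z_1 z_2 z_3 - z_4`. -/
theorem toricIdeal_fluid_two_generators :
    toricIdeal Afluid = Ideal.span
      ({ X 4 - X 1 * X 2 * X 3,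
         X 0 * X 1 * X 2 - X 3 } : Set (MvPolynomial (Fin 5) ℚ)) := by
  apply le_antisymm
  · intro p hp
    have hker : phi Afluid p = 0 := hp
    have hpr : p - MvPolynomial.rename emb (ρ p) ∈ Ideal.span Jgen := key_reduction p
    have h1 : phi Afluid (MvPolynomial.rename emb (ρ p)) = 0 := by
      have h2 : phi Afluid (p - MvPolynomial.rename emb (ρ p)) = 0 := span_le_ker hpr
      rw [map_sub, hker, zero_sub, neg_eq_zero] at h2
      exact h2
    have h3 : phi A3 (ρ p) = 0 := by
      rw [← phi_comp_rename]; exact h1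
    have h4 : ρ p = 0 := phi_A3_injective (by rw [h3, map_zero])
    have h5 : MvPolynomial.rename emb (ρ p) = 0 := by rw [h4, map_zero]
    rwa [h5, sub_zero] at hpr
  · exact span_le_ker
end

section
/- Let A be the 5×7 integer matrix with rows (0,0,0,0,1,−1,1), (−2,1,1,−1,−1,0,−3), (−1,−1,0,−1,−1,0,0), (−1,0,0,−1,0,−1,0), (1,0,0,1,0,1,0), with variables a,b,c,d,e,f,g. Then each of the binomials b c f g − d and a c − e f lies in the toric ideal I_A ⊆ ℚ[a,b,c,d,e,f,g] and is a primitive element of I_A. (The binomial a c − e f corresponds to the dimensionless quantity hL/(μc), the ratio of the Nusselt number to the product of the Reynolds and Prandtl numbers.) -/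
open MvPolynomial

/-- `x^u - x^v` is a primitive binomial of the toric ideal `I_A`:
it lies in `I_A`, `u ≠ v`, and there is no binomial `x^{u'} - x^{v'} ∈ I_A`
with `u' ≠ v'`, `(u',v') ≠ (u,v)`, `u' ≤ u` and `v' ≤ v` componentwise. -/
def IsPrimitiveBinomial {d n : ℕ} (A : Matrix (Fin d) (Fin n) ℤ)
    (u v : Fin n → ℕ) : Prop :=
  u ≠ v ∧ monoP u - monoP v ∈ toricIdeal A ∧
    ∀ u' v' : Fin n → ℕ, u' ≠ v' → (u', v') ≠ (u, v) →
      monoP u' - monoP v' ∈ toricIdeal A → ¬(u' ≤ u ∧ v' ≤ v)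

/-- The forced-convection matrix: rows `(0,0,0,0,1,-1,1)`, `(-2,1,1,-1,-1,0,-3)`,
`(-1,-1,0,-1,-1,0,0)`, `(-1,0,0,-1,0,-1,0)`, `(1,0,0,1,0,1,0)`; variables
`a, b, c, d, e, f, g`. -/
noncomputable def Aconv : Matrix (Fin 5) (Fin 7) ℤ :=
  !![0, 0, 0, 0, 1, -1, 1;
     -2, 1, 1, -1, -1, 0, -3;
     -1, -1, 0, -1, -1, 0, 0;
     -1, 0, 0, -1, 0, -1, 0;
     1, 0, 0, 1, 0, 1, 0]

lemma phi_monoP {d n : ℕ} (A : Matrix (Fin d) (Fin n) ℤ) (u : Fin n → ℕ) :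
    phi A (monoP u) = AddMonoidAlgebra.single (∑ i, u i • fun j => A j i) 1 := by
  rw [monoP, map_prod]
  simp only [phi, map_pow, aeval_X, AddMonoidAlgebra.single_pow, one_pow]
  rw [AddMonoidAlgebra.prod_single]
  simp

lemma mem_iff {d n : ℕ} (A : Matrix (Fin d) (Fin n) ℤ) (u v : Fin n → ℕ) :
    monoP u - monoP v ∈ toricIdeal A ↔
      ∀ j, ∑ i, (u i : ℤ) * A j i = ∑ i, (v i : ℤ) * A j i := by
  rw [toricIdeal, RingHom.mem_ker, map_sub, sub_eq_zero, phi_monoP, phi_monoP]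
  constructor
  · intro h j
    have := AddMonoidAlgebra.single_left_injective (M := Fin d → ℤ) (one_ne_zero (α := ℚ)) h
    have := congrFun this j
    simpa [Finset.sum_apply, nsmul_eq_mul] using this
  · intro h
    congr 1
    funext j
    simpa [Finset.sum_apply, nsmul_eq_mul] using h j

lemma cons_val_five {α : Type*} {m : ℕ} (x : α) (u : Fin (m+5) → α) :
    Matrix.vecCons x u 5 =
      Matrix.vecHead (Matrix.vecTail (Matrix.vecTail (Matrix.vecTail (Matrix.vecTail u)))) :=
  rfl

lemma cons_val_six {α : Type*} {m : ℕ} (x : α) (u : Fin (m+6) → α) :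
    Matrix.vecCons x u 6 =
      Matrix.vecHead (Matrix.vecTail (Matrix.vecTail (Matrix.vecTail (Matrix.vecTail (Matrix.vecTail u))))) :=
  rfl

set_option maxHeartbeats 1000000 in
/-- The binomials `b c f g - d` and `a c - e f` lie in the toric
ideal of the forced-convection matrix and are primitive. (The binomial `a c - e f`
corresponds to `hL/(μc)`, the Nusselt number over Reynolds times Prandtl.) -/
theorem convection_primitive_binomials :
    IsPrimitiveBinomial Aconv ![0, 1, 1, 0, 0, 1, 1] ![0, 0, 0, 1, 0, 0, 0] ∧
    IsPrimitiveBinomial Aconv ![1, 0, 1, 0, 0, 0, 0] ![0, 0, 0, 0, 1, 1, 0] := by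
  constructor
  · refine ⟨by decide, ?_, ?_⟩
    · rw [mem_iff]
      intro j
      fin_cases j <;> simp [Aconv, Fin.sum_univ_seven, cons_val_five, cons_val_six]
    · rintro u' v' hne hnep hmem ⟨hu, hv⟩
      rw [mem_iff] at hmem
      have h0 := hmem 0; have h1 := hmem 1; have h2 := hmem 2
      have h3 := hmem 3; have h4 := hmem 4
      simp [Aconv, Fin.sum_univ_seven, cons_val_five, cons_val_six] at h0 h1 h2 h3 h4
      have b0 : u' 0 ≤ 0 := hu 0
      have b1 : u' 1 ≤ 1 := hu 1
      have b2 : u' 2 ≤ 1 := hu 2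
      have b3 : u' 3 ≤ 0 := hu 3
      have b4 : u' 4 ≤ 0 := hu 4
      have b5 : u' 5 ≤ 1 := hu 5
      have b6 : u' 6 ≤ 1 := hu 6
      have c0 : v' 0 ≤ 0 := hv 0
      have c1 : v' 1 ≤ 0 := hv 1
      have c2 : v' 2 ≤ 0 := hv 2
      have c3 : v' 3 ≤ 1 := hv 3
      have c4 : v' 4 ≤ 0 := hv 4
      have c5 : v' 5 ≤ 0 := hv 5
      have c6 : v' 6 ≤ 0 := hv 6
      by_cases hc : v' 3 = 0
      · have e0 : u' 0 = v' 0 := by omega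
        have e1 : u' 1 = v' 1 := by omega
        have e2 : u' 2 = v' 2 := by omega
        have e3 : u' 3 = v' 3 := by omega
        have e4 : u' 4 = v' 4 := by omega
        have e5 : u' 5 = v' 5 := by omega
        have e6 : u' 6 = v' 6 := by omega
        exact hne (funext fun i => by fin_cases i <;> assumption)
      · have e0 : u' 0 = 0 := by omega
        have e1 : u' 1 = 1 := by omega
        have e2 : u' 2 = 1 := by omega
        have e3 : u' 3 = 0 := by omega
        have e4 : u' 4 = 0 := by omega
        have e5 : u' 5 = 1 := by omega
        have e6 : u' 6 = 1 := by omega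
        have f0 : v' 0 = 0 := by omega
        have f1 : v' 1 = 0 := by omega
        have f2 : v' 2 = 0 := by omega
        have f3 : v' 3 = 1 := by omega
        have f4 : v' 4 = 0 := by omega
        have f5 : v' 5 = 0 := by omega
        have f6 : v' 6 = 0 := by omega
        exact hnep (Prod.ext (funext fun i => by fin_cases i <;> assumption)
          (funext fun i => by fin_cases i <;> assumption))
  · refine ⟨by decide, ?_, ?_⟩
    · rw [mem_iff]
      intro j
      fin_cases j <;> simp [Aconv, Fin.sum_univ_seven, cons_val_five, cons_val_six]
    · rintro u' v' hne hnep hmem ⟨hu, hv⟩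
      rw [mem_iff] at hmem
      have h0 := hmem 0; have h1 := hmem 1; have h2 := hmem 2
      have h3 := hmem 3; have h4 := hmem 4
      simp [Aconv, Fin.sum_univ_seven, cons_val_five, cons_val_six] at h0 h1 h2 h3 h4
      have b0 : u' 0 ≤ 1 := hu 0
      have b1 : u' 1 ≤ 0 := hu 1
      have b2 : u' 2 ≤ 1 := hu 2
      have b3 : u' 3 ≤ 0 := hu 3
      have b4 : u' 4 ≤ 0 := hu 4
      have b5 : u' 5 ≤ 0 := hu 5
      have b6 : u' 6 ≤ 0 := hu 6
      have c0 : v' 0 ≤ 0 := hv 0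
      have c1 : v' 1 ≤ 0 := hv 1
      have c2 : v' 2 ≤ 0 := hv 2
      have c3 : v' 3 ≤ 0 := hv 3
      have c4 : v' 4 ≤ 1 := hv 4
      have c5 : v' 5 ≤ 1 := hv 5
      have c6 : v' 6 ≤ 0 := hv 6
      by_cases hc : u' 0 = 0
      · have e0 : u' 0 = v' 0 := by omega
        have e1 : u' 1 = v' 1 := by omega
        have e2 : u' 2 = v' 2 := by omega
        have e3 : u' 3 = v' 3 := by omega
        have e4 : u' 4 = v' 4 := by omega
        have e5 : u' 5 = v' 5 := by omega
        have e6 : u' 6 = v' 6 := by omega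
        exact hne (funext fun i => by fin_cases i <;> assumption)
      · have e0 : u' 0 = 1 := by omega
        have e1 : u' 1 = 0 := by omega
        have e2 : u' 2 = 1 := by omega
        have e3 : u' 3 = 0 := by omega
        have e4 : u' 4 = 0 := by omega
        have e5 : u' 5 = 0 := by omega
        have e6 : u' 6 = 0 := by omega
        have f0 : v' 0 = 0 := by omega
        have f1 : v' 1 = 0 := by omega
        have f2 : v' 2 = 0 := by omega
        have f3 : v' 3 = 0 := by omega
        have f4 : v' 4 = 1 := by omega
        have f5 : v' 5 = 1 := by omega
        have f6 : v' 6 = 0 := by omega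
        exact hnep (Prod.ext (funext fun i => by fin_cases i <;> assumption)
          (funext fun i => by fin_cases i <;> assumption))
end

section
/- Let A be the 4×5 integer matrix with rows (0,1,−1,1,1), (0,2,−2,2,2), (1,−3,4,−2,−3), (1,−1,2,−2,−2) (the electrodynamics example with variables a = charge, b = potential, c = capacitance, d = inductance, e = resistance). Then the toric ideal I_A ⊆ ℚ[a,b,c,d,e] equals the ideal generated by the three binomials b c − a, d − c e², and b d − a e². -/
open MvPolynomial

/-- The electrodynamics matrix: rows `(0,1,-1,1,1)`, `(0,2,-2,2,2)`,
`(1,-3,4,-2,-3)`, `(1,-1,2,-2,-2)`; variables `a` = charge, `b` = potential,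
`c` = capacitance, `d` = inductance, `e` = resistance. -/
noncomputable def Aelec : Matrix (Fin 4) (Fin 5) ℤ :=
  !![0, 1, -1, 1, 1; 0, 2, -2, 2, 2; 1, -3, 4, -2, -3; 1, -1, 2, -2, -2]

/-! ### Auxiliary machinery -/

/-- The columns `b`, `c`, `e` of `Aelec`. -/
def wv : Fin 3 → Fin 4 → ℤ := ![![1, 2, -3, -1], ![-1, -2, 4, 2], ![1, 2, -3, -2]]

/-- The additive monoid hom `ℕ^3 → ℤ^4` sending `u ↦ ∑ u i • wv i`. -/
noncomputable def Fm : (Fin 3 →₀ ℕ) →+ (Fin 4 → ℤ) where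
  toFun u := ∑ i : Fin 3, (u i : ℤ) • wv i
  map_zero' := by simp
  map_add' u v := by
    simp [Finsupp.add_apply, add_smul, Finset.sum_add_distrib]

lemma Fm_apply (u : Fin 3 →₀ ℕ) (j : Fin 4) :
    Fm u j = (u 0 : ℤ) * wv 0 j + (u 1 : ℤ) * wv 1 j + (u 2 : ℤ) * wv 2 j := by
  simp [Fm, Fin.sum_univ_three]

lemma Fm_inj : Function.Injective Fm := by
  intro u v h
  have h0 := congrFun h 0
  have h2 := congrFun h 2
  have h3 := congrFun h 3
  rw [Fm_apply, Fm_apply] at h0 h2 h3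
  simp only [wv] at h0 h2 h3
  norm_num [Matrix.cons_val_zero, Matrix.cons_val_one, Matrix.cons_val_two, Matrix.vecHead, Matrix.vecTail, Matrix.cons_val] at h0 h2 h3
  simp only [show (![1, 2, -3, -1] : Fin 4 → ℤ) 3 = -1 from rfl, show (![-1, -2, 4, 2] : Fin 4 → ℤ) 3 = 2 from rfl, show (![1, 2, -3, -2] : Fin 4 → ℤ) 3 = -2 from rfl] at h3
  ext i
  fin_cases i <;> simp <;> omega

/-- Inclusion `ℚ[y₀,y₁,y₂] → ℚ[x₀,…,x₄]` sending `y₀ ↦ x₁ = b`, `y₁ ↦ x₂ = c`,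
`y₂ ↦ x₄ = e`. -/
noncomputable def ι3 : MvPolynomial (Fin 3) ℚ →ₐ[ℚ] MvPolynomial (Fin 5) ℚ :=
  aeval ![X 1, X 2, X 4]

/-- Retraction `ℚ[x₀,…,x₄] → ℚ[y₀,y₁,y₂]` sending `a ↦ bc`, `d ↦ ce²`. -/
noncomputable def τ5 : MvPolynomial (Fin 5) ℚ →ₐ[ℚ] MvPolynomial (Fin 3) ℚ :=
  aeval ![X 0 * X 1, X 0, X 1, X 1 * X 2 ^ 2, X 2]

lemma phi_comp_ι3 : (phi Aelec).comp ι3 = AddMonoidAlgebra.mapDomainAlgHom ℚ ℚ Fm := by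
  apply MvPolynomial.algHom_ext
  intro i
  have hX : (X i : MvPolynomial (Fin 3) ℚ) = AddMonoidAlgebra.single (Finsupp.single i 1) (1:ℚ) :=
    (single_eq_monomial _ _).symm
  have key : (AddMonoidAlgebra.mapDomainAlgHom ℚ ℚ Fm) (X i)
      = AddMonoidAlgebra.single (Fm (Finsupp.single i 1)) (1:ℚ) := by
    rw [hX]; exact AddMonoidAlgebra.mapDomain_single
  rw [AlgHom.comp_apply]
  refine Eq.trans ?_ key.symm
  fin_cases i <;>
  · simp [ι3, phi]
    congr 1
    funext j
    rw [Fm_apply]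
    fin_cases j <;> simp [wv, Aelec]

/-- The candidate ideal. -/
noncomputable def Jelec : Ideal (MvPolynomial (Fin 5) ℚ) :=
  Ideal.span ({ X 1 * X 2 - X 0, X 3 - X 2 * X 4 ^ 2,
    X 1 * X 3 - X 0 * X 4 ^ 2 } : Set (MvPolynomial (Fin 5) ℚ))

lemma colsum1 : ((fun j => Aelec j 1) + fun j => Aelec j 2) = fun j => Aelec j 0 := by
  funext j; fin_cases j <;> decide

lemma colsum2 : ((fun j => Aelec j 2) + (((fun j => Aelec j 4) : Fin 4 → ℤ)
    + fun j => Aelec j 4)) = fun j => Aelec j 3 := by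
  funext j; fin_cases j <;> decide

lemma colsum3 : ((fun j => Aelec j 1) + fun j => Aelec j 3)
    = ((fun j => Aelec j 0) + (((fun j => Aelec j 4) : Fin 4 → ℤ) + fun j => Aelec j 4)) := by
  funext j; fin_cases j <;> decide

lemma phiX (i : Fin 5) : phi Aelec (X i)
    = AddMonoidAlgebra.single (fun j => Aelec j i) 1 := by
  simp [phi]

lemma phi_g1 : phi Aelec (X 1 * X 2 - X 0) = 0 := by
  rw [map_sub, map_mul, phiX, phiX, phiX,
    AddMonoidAlgebra.single_mul_single, mul_one, sub_eq_zero, colsum1]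

lemma phi_g2 : phi Aelec (X 3 - X 2 * X 4 ^ 2) = 0 := by
  rw [map_sub, map_mul, map_pow, phiX, phiX, phiX, pow_two,
    AddMonoidAlgebra.single_mul_single, AddMonoidAlgebra.single_mul_single,
    mul_one, mul_one, sub_eq_zero, colsum2]

lemma phi_g3 : phi Aelec (X 1 * X 3 - X 0 * X 4 ^ 2) = 0 := by
  rw [map_sub, map_mul, map_mul, map_pow, phiX, phiX, phiX, phiX, pow_two,
    AddMonoidAlgebra.single_mul_single, AddMonoidAlgebra.single_mul_single,
    AddMonoidAlgebra.single_mul_single]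
  simp only [mul_one]
  rw [sub_eq_zero, colsum3]

lemma sig0 : ι3 (τ5 (X (0:Fin 5))) = X 1 * X 2 := by simp [ι3, τ5]
lemma sig1 : ι3 (τ5 (X (1:Fin 5))) = X 1 := by simp [ι3, τ5]
lemma sig2 : ι3 (τ5 (X (2:Fin 5))) = X 2 := by simp [ι3, τ5]
lemma sig3 : ι3 (τ5 (X (3:Fin 5))) = X 2 * X 4 ^ 2 := by simp [ι3, τ5]
lemma sig4 : ι3 (τ5 (X (4:Fin 5))) = X 4 := by simp [ι3, τ5]

lemma mk_comp : (Ideal.Quotient.mkₐ ℚ Jelec).comp (ι3.comp τ5) = Ideal.Quotient.mkₐ ℚ Jelec := by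
  apply MvPolynomial.algHom_ext
  intro i
  rw [AlgHom.comp_apply, AlgHom.comp_apply]
  fin_cases i
  · show Ideal.Quotient.mkₐ ℚ Jelec (ι3 (τ5 (X 0))) = Ideal.Quotient.mkₐ ℚ Jelec (X 0)
    rw [sig0, Ideal.Quotient.mkₐ_eq_mk, Ideal.Quotient.eq]
    exact Ideal.subset_span (by left; rfl)
  · show Ideal.Quotient.mkₐ ℚ Jelec (ι3 (τ5 (X 1))) = Ideal.Quotient.mkₐ ℚ Jelec (X 1)
    rw [sig1]
  · show Ideal.Quotient.mkₐ ℚ Jelec (ι3 (τ5 (X 2))) = Ideal.Quotient.mkₐ ℚ Jelec (X 2)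
    rw [sig2]
  · show Ideal.Quotient.mkₐ ℚ Jelec (ι3 (τ5 (X 3))) = Ideal.Quotient.mkₐ ℚ Jelec (X 3)
    rw [sig3, Ideal.Quotient.mkₐ_eq_mk, Ideal.Quotient.eq]
    rw [show (X 2 * X 4 ^ 2 - X 3 : MvPolynomial (Fin 5) ℚ)
        = -(X 3 - X 2 * X 4 ^ 2) by ring]
    exact neg_mem (Ideal.subset_span (by right; left; rfl))
  · show Ideal.Quotient.mkₐ ℚ Jelec (ι3 (τ5 (X 4))) = Ideal.Quotient.mkₐ ℚ Jelec (X 4)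
    rw [sig4]

lemma phi_comp_sigma : (phi Aelec).comp (ι3.comp τ5) = phi Aelec := by
  apply MvPolynomial.algHom_ext
  intro i
  rw [AlgHom.comp_apply, AlgHom.comp_apply]
  fin_cases i
  · show phi Aelec (ι3 (τ5 (X 0))) = phi Aelec (X 0)
    rw [sig0, map_mul, phiX, phiX, phiX,
      AddMonoidAlgebra.single_mul_single, mul_one, colsum1]
  · show phi Aelec (ι3 (τ5 (X 1))) = phi Aelec (X 1)
    rw [sig1]
  · show phi Aelec (ι3 (τ5 (X 2))) = phi Aelec (X 2)
    rw [sig2]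
  · show phi Aelec (ι3 (τ5 (X 3))) = phi Aelec (X 3)
    rw [sig3, map_mul, map_pow, phiX, phiX, phiX, pow_two,
      AddMonoidAlgebra.single_mul_single, AddMonoidAlgebra.single_mul_single,
      mul_one, mul_one, colsum2]
  · show phi Aelec (ι3 (τ5 (X 4))) = phi Aelec (X 4)
    rw [sig4]

/-- The toric ideal of the electrodynamics matrix is generated
by the three binomials `b c - a`, `d - c e²` and `b d - a e²`. -/
theorem toricIdeal_electrodynamics :
    toricIdeal Aelec = Ideal.span
      ({ X 1 * X 2 - X 0,
         X 3 - X 2 * X 4 ^ 2,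
         X 1 * X 3 - X 0 * X 4 ^ 2 } : Set (MvPolynomial (Fin 5) ℚ)) := by
  rw [show Ideal.span ({ X 1 * X 2 - X 0, X 3 - X 2 * X 4 ^ 2,
      X 1 * X 3 - X 0 * X 4 ^ 2 } : Set (MvPolynomial (Fin 5) ℚ)) = Jelec from rfl]
  apply le_antisymm
  · -- toric ideal ⊆ J
    intro f hf
    have hf0 : phi Aelec f = 0 := hf
    have hsub : f - ι3 (τ5 f) ∈ Jelec := by
      have := DFunLike.congr_fun mk_comp f
      simp only [AlgHom.comp_apply, Ideal.Quotient.mkₐ_eq_mk] at this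
      exact (Ideal.Quotient.eq).mp this.symm
    have hker : phi Aelec (ι3 (τ5 f)) = 0 := by
      have := DFunLike.congr_fun phi_comp_sigma f
      simp only [AlgHom.comp_apply] at this
      rw [this, hf0]
    have hmap : (AddMonoidAlgebra.mapDomainAlgHom ℚ ℚ Fm) (τ5 f) = 0 := by
      have := DFunLike.congr_fun phi_comp_ι3 (τ5 f)
      simp only [AlgHom.comp_apply] at this
      exact this.symm.trans hker
    have hinj : Function.Injective (AddMonoidAlgebra.mapDomainAlgHom ℚ ℚ Fm) :=
      AddMonoidAlgebra.mapDomain_injective Fm_inj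
    have hτ : τ5 f = 0 := hinj (by rw [hmap, map_zero])
    have hι : ι3 (τ5 f) = 0 := by rw [hτ, map_zero]
    rw [hι, sub_zero] at hsub
    exact hsub
  · -- J ⊆ toric ideal
    rw [Jelec, Ideal.span_le]
    rintro g hg
    simp only [Set.mem_insert_iff, Set.mem_singleton_iff] at hg
    rcases hg with rfl | rfl | rfl
    · exact phi_g1
    · exact phi_g2
    · exact phi_g3
end

section
/- Let A be the 3×6 integer matrix with rows (1,0,1,1,1,0), (0,1,2,2,3,1), (0,0,−2,−1,−2,−1) (the hydrogen-atom example with variables a = electron mass m_e, b = Bohr radius a_0, c = energy E, d = Planck's constant ħ, e = squared electron charge e², f = speed of light). Then the toric ideal I_A ⊆ ℚ[a,b,c,d,e,f] equals the ideal generated by the seven binomials e − d f, b c − d f, a b e − d², a e² − c d², a b f − d, a f² − c, and a e f − c d. -/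
open MvPolynomial

/-- The hydrogen-atom matrix: rows `(1,0,1,1,1,0)`, `(0,1,2,2,3,1)`,
`(0,0,-2,-1,-2,-1)`; variables `a` = electron mass `m_e`, `b` = Bohr radius `a_0`,
`c` = energy `E`, `d` = Planck's constant `ħ`, `e` = squared electron charge `e²`,
`f` = speed of light. -/
noncomputable def Aquantum : Matrix (Fin 3) (Fin 6) ℤ :=
  !![1, 0, 1, 1, 1, 0; 0, 1, 2, 2, 3, 1; 0, 0, -2, -1, -2, -1]

/-- The matrix of columns 0, 1, 5 of `Aquantum`. -/
noncomputable def Bq : Matrix (Fin 3) (Fin 3) ℤ := !![1,0,0;0,1,1;0,0,-1]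

/-- The additive map `(Fin 3 →₀ ℕ) →+ (Fin 3 → ℤ)` given by `Bq`. -/
noncomputable def F3 : (Fin 3 →₀ ℕ) →+ (Fin 3 → ℤ) where
  toFun u := ![(u 0 : ℤ), (u 1 : ℤ) + u 2, -(u 2 : ℤ)]
  map_zero' := by ext j; fin_cases j <;> simp
  map_add' u v := by ext j; fin_cases j <;> simp <;> ring

lemma F3_inj : Function.Injective F3 := by
  intro u v h
  have h0 := congrFun h 0
  have h1 := congrFun h 1
  have h2 := congrFun h 2
  simp [F3] at h0 h1 h2
  have e0 : u 0 = v 0 := by exact_mod_cast h0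
  have e2 : u 2 = v 2 := by omega
  have e1 : u 1 = v 1 := by omega
  ext i
  fin_cases i
  · exact e0
  · exact e1
  · exact e2

lemma phiBq_eq : phi Bq = (AddMonoidAlgebra.mapDomainAlgHom ℚ ℚ F3 :
    MvPolynomial (Fin 3) ℚ →ₐ[ℚ] AddMonoidAlgebra ℚ (Fin 3 → ℤ)) := by
  apply MvPolynomial.algHom_ext
  intro i
  show _ = AddMonoidAlgebra.mapDomainAlgHom ℚ ℚ F3 (MvPolynomial.monomial (Finsupp.single i 1) 1)
  rw [phi, aeval_X]
  show _ = AddMonoidAlgebra.mapDomain F3 (AddMonoidAlgebra.single (Finsupp.single i 1) 1)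
  rw [AddMonoidAlgebra.mapDomain_single]
  congr 1
  fin_cases i <;> · funext j; fin_cases j <;> simp [F3, Bq, Matrix.vecHead, Matrix.vecTail]

lemma phiBq_inj : Function.Injective (phi Bq) := by
  rw [phiBq_eq]
  intro x y h
  exact AddMonoidAlgebra.mapDomain_injective F3_inj (by simpa using h)

/-- The inclusion `ℚ[a,b,f] → ℚ[a,…,f]`. -/
noncomputable def iota : MvPolynomial (Fin 3) ℚ →ₐ[ℚ] MvPolynomial (Fin 6) ℚ :=
  aeval ![X 0, X 1, X 5]

/-- The substitution eliminating `c, d, e`. -/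
noncomputable def tau : MvPolynomial (Fin 6) ℚ →ₐ[ℚ] MvPolynomial (Fin 3) ℚ :=
  aeval ![X 0, X 1, X 0 * X 2 ^ 2, X 0 * X 1 * X 2, X 0 * X 1 * X 2 ^ 2, X 2]

lemma tau_X0 : tau (X 0) = X 0 := by rw [tau, aeval_X]; rfl
lemma tau_X1 : tau (X 1) = X 1 := by rw [tau, aeval_X]; rfl
lemma tau_X2 : tau (X 2) = X 0 * X 2 ^ 2 := by rw [tau, aeval_X]; rfl
lemma tau_X3 : tau (X 3) = X 0 * X 1 * X 2 := by rw [tau, aeval_X]; rfl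
lemma tau_X4 : tau (X 4) = X 0 * X 1 * X 2 ^ 2 := by rw [tau, aeval_X]; rfl
lemma tau_X5 : tau (X 5) = X 2 := by rw [tau, aeval_X]; rfl
lemma iota_X0 : iota (X 0) = X 0 := by rw [iota, aeval_X]; rfl
lemma iota_X1 : iota (X 1) = X 1 := by rw [iota, aeval_X]; rfl
lemma iota_X2 : iota (X 2) = X 5 := by rw [iota, aeval_X]; rfl

lemma sig_X0 : iota (tau (X 0)) = X 0 := by rw [tau_X0, iota_X0]
lemma sig_X1 : iota (tau (X 1)) = X 1 := by rw [tau_X1, iota_X1]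
lemma sig_X2 : iota (tau (X 2)) = X 0 * X 5 ^ 2 := by
  rw [tau_X2, map_mul, map_pow, iota_X0, iota_X2]
lemma sig_X3 : iota (tau (X 3)) = X 0 * X 1 * X 5 := by
  rw [tau_X3, map_mul, map_mul, iota_X0, iota_X1, iota_X2]
lemma sig_X4 : iota (tau (X 4)) = X 0 * X 1 * X 5 ^ 2 := by
  rw [tau_X4, map_mul, map_mul, map_pow, iota_X0, iota_X1, iota_X2]
lemma sig_X5 : iota (tau (X 5)) = X 5 := by rw [tau_X5, iota_X2]

lemma key2 : (phi Bq).comp tau = phi Aquantum := by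
  apply MvPolynomial.algHom_ext
  intro i
  fin_cases i
  · simp only [AlgHom.comp_apply]
    show phi Bq (tau (X 0)) = phi Aquantum (X 0)
    rw [tau_X0]
    simp only [phi, map_mul, map_pow, aeval_X, AddMonoidAlgebra.single_pow,
      AddMonoidAlgebra.single_mul_single, one_mul, mul_one, one_pow]
    congr 1
    decide
  · simp only [AlgHom.comp_apply]
    show phi Bq (tau (X 1)) = phi Aquantum (X 1)
    rw [tau_X1]
    simp only [phi, map_mul, map_pow, aeval_X, AddMonoidAlgebra.single_pow,
      AddMonoidAlgebra.single_mul_single, one_mul, mul_one, one_pow]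
    congr 1
    decide
  · simp only [AlgHom.comp_apply]
    show phi Bq (tau (X 2)) = phi Aquantum (X 2)
    rw [tau_X2]
    simp only [phi, map_mul, map_pow, aeval_X, AddMonoidAlgebra.single_pow,
      AddMonoidAlgebra.single_mul_single, one_mul, mul_one, one_pow]
    congr 1
    decide
  · simp only [AlgHom.comp_apply]
    show phi Bq (tau (X 3)) = phi Aquantum (X 3)
    rw [tau_X3]
    simp only [phi, map_mul, map_pow, aeval_X, AddMonoidAlgebra.single_pow,
      AddMonoidAlgebra.single_mul_single, one_mul, mul_one, one_pow]
    congr 1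
    decide
  · simp only [AlgHom.comp_apply]
    show phi Bq (tau (X 4)) = phi Aquantum (X 4)
    rw [tau_X4]
    simp only [phi, map_mul, map_pow, aeval_X, AddMonoidAlgebra.single_pow,
      AddMonoidAlgebra.single_mul_single, one_mul, mul_one, one_pow]
    congr 1
    decide
  · simp only [AlgHom.comp_apply]
    show phi Bq (tau (X 5)) = phi Aquantum (X 5)
    rw [tau_X5]
    simp only [phi, map_mul, map_pow, aeval_X, AddMonoidAlgebra.single_pow,
      AddMonoidAlgebra.single_mul_single, one_mul, mul_one, one_pow]
    congr 1
    decide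

/-- The toric ideal of the hydrogen-atom matrix is generated by
the seven binomials `e - d f`, `b c - d f`, `a b e - d²`, `a e² - c d²`,
`a b f - d`, `a f² - c` and `a e f - c d`. -/
theorem toricIdeal_quantum :
    toricIdeal Aquantum = Ideal.span
      ({ X 4 - X 3 * X 5,
         X 1 * X 2 - X 3 * X 5,
         X 0 * X 1 * X 4 - X 3 ^ 2,
         X 0 * X 4 ^ 2 - X 2 * X 3 ^ 2,
         X 0 * X 1 * X 5 - X 3,
         X 0 * X 5 ^ 2 - X 2,
         X 0 * X 4 * X 5 - X 2 * X 3 } : Set (MvPolynomial (Fin 6) ℚ)) := by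
  set S : Set (MvPolynomial (Fin 6) ℚ) :=
      { X 4 - X 3 * X 5,
         X 1 * X 2 - X 3 * X 5,
         X 0 * X 1 * X 4 - X 3 ^ 2,
         X 0 * X 4 ^ 2 - X 2 * X 3 ^ 2,
         X 0 * X 1 * X 5 - X 3,
         X 0 * X 5 ^ 2 - X 2,
         X 0 * X 4 * X 5 - X 2 * X 3 } with hS
  set J : Ideal (MvPolynomial (Fin 6) ℚ) := Ideal.span S with hJ
  have g1 : X 4 - X 3 * X 5 ∈ J := Ideal.subset_span (by simp [hS])
  have g5 : X 0 * X 1 * X 5 - X 3 ∈ J := Ideal.subset_span (by simp [hS])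
  have g6 : X 0 * X 5 ^ 2 - X 2 ∈ J := Ideal.subset_span (by simp [hS])
  have hsub : ∀ p : MvPolynomial (Fin 6) ℚ, p - iota (tau p) ∈ J := by
    have hcomp : (Ideal.Quotient.mkₐ ℚ J).comp (iota.comp tau) = Ideal.Quotient.mkₐ ℚ J := by
      apply MvPolynomial.algHom_ext
      intro i
      fin_cases i
      · show Ideal.Quotient.mkₐ ℚ J (iota (tau (X 0))) = Ideal.Quotient.mkₐ ℚ J (X 0)
        rw [sig_X0]
      · show Ideal.Quotient.mkₐ ℚ J (iota (tau (X 1))) = Ideal.Quotient.mkₐ ℚ J (X 1)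
        rw [sig_X1]
      · show Ideal.Quotient.mkₐ ℚ J (iota (tau (X 2))) = Ideal.Quotient.mkₐ ℚ J (X 2)
        rw [sig_X2]
        simp only [Ideal.Quotient.mkₐ_eq_mk]
        rw [Ideal.Quotient.eq]
        exact g6
      · show Ideal.Quotient.mkₐ ℚ J (iota (tau (X 3))) = Ideal.Quotient.mkₐ ℚ J (X 3)
        rw [sig_X3]
        simp only [Ideal.Quotient.mkₐ_eq_mk]
        rw [Ideal.Quotient.eq]
        exact g5
      · show Ideal.Quotient.mkₐ ℚ J (iota (tau (X 4))) = Ideal.Quotient.mkₐ ℚ J (X 4)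
        rw [sig_X4]
        simp only [Ideal.Quotient.mkₐ_eq_mk]
        rw [Ideal.Quotient.eq]
        have : (X 0 : MvPolynomial (Fin 6) ℚ) * X 1 * X 5 ^ 2 - X 4 =
            ((X 0 : MvPolynomial (Fin 6) ℚ) * X 1 * X 5 - X 3) * X 5 - (X 4 - X 3 * X 5) := by
          ring
        rw [this]
        exact sub_mem (J.mul_mem_right _ g5) g1
      · show Ideal.Quotient.mkₐ ℚ J (iota (tau (X 5))) = Ideal.Quotient.mkₐ ℚ J (X 5)
        rw [sig_X5]
    intro p
    have h := congrArg (fun f : MvPolynomial (Fin 6) ℚ →ₐ[ℚ] _ => f p) hcomp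
    simp only [AlgHom.comp_apply, Ideal.Quotient.mkₐ_eq_mk] at h
    exact Ideal.Quotient.eq.mp h.symm
  apply le_antisymm
  · intro p hp
    have hp0 : phi Aquantum p = 0 := hp
    have htau : phi Bq (tau p) = 0 := by
      have h := congrArg (fun f : MvPolynomial (Fin 6) ℚ →ₐ[ℚ] _ => f p) key2
      simp only [AlgHom.comp_apply] at h
      rw [h, hp0]
    have h0 : tau p = 0 := phiBq_inj (by simpa using htau)
    have h1 : iota (tau p) = 0 := by rw [h0, map_zero]
    have h2 := hsub p
    rwa [h1, sub_zero] at h2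
  · rw [hJ, Ideal.span_le]
    intro g hg
    refine SetLike.mem_coe.mpr (RingHom.mem_ker.mpr ?_)
    simp only [hS, Set.mem_insert_iff, Set.mem_singleton_iff] at hg
    rcases hg with h|h|h|h|h|h|h <;> subst h <;>
    · simp only [phi, map_sub, map_mul, map_pow, aeval_X,
        AddMonoidAlgebra.single_pow, AddMonoidAlgebra.single_mul_single,
        one_mul, mul_one, one_pow, sub_eq_zero]
      congr 1
      decide
end
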